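/- Let p ∈ [1,∞] and let p' be its conjugate exponent (1/p + 1/p' = 1). There exist constants 0 < c ≤ C, depending only on d and p, such that for every nonnegative measurable function g : ℝ^d → [0,∞): c·|||g|||*_p ≤ sup { ∫_{ℝ^d} f(x) g(x) dx : f : ℝ^d → [0,∞) measurable with |||f|||_{p'} ≤ 1 } ≤ C·|||g|||*_p. -/

import Mathlib

open MeasureTheory ENNReal

noncomputable section

/-- The half-open unit cube centered at the lattice point `z`. -/
def unitCube (d : ℕ) (z : Fin d → ℤ) : Set (EuclideanSpace ℝ (Fin d)) :=
  {x | ∀ i, (z i : ℝ) - 1/2 ≤ x i ∧ x i < (z i : ℝ) + 1/2}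

/-- The localized norm `|||f|||_p := sup_{z ∈ ℤ^d} ‖f·1_{D_z}‖_{L^p}`. -/
def locNorm (d : ℕ) (p : ℝ≥0∞) (f : EuclideanSpace ℝ (Fin d) → ℝ) : ℝ≥0∞ :=
  ⨆ z : Fin d → ℤ, eLpNorm ((unitCube d z).indicator f) p volume

/-- The localized norm `|||f|||*_p := Σ_{z ∈ ℤ^d} ‖f·1_{D_z}‖_{L^p}`. -/
def locNormStar (d : ℕ) (p : ℝ≥0∞) (f : EuclideanSpace ℝ (Fin d) → ℝ) : ℝ≥0∞ :=
  ∑' z : Fin d → ℤ, eLpNorm ((unitCube d z).indicator f) p volume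

variable {d : ℕ}

lemma unitCube_eq (z : Fin d → ℤ) :
    unitCube d z = (MeasurableEquiv.toLp 2 (Fin d → ℝ)).symm ⁻¹'
      (Set.univ.pi fun i => Set.Ico ((z i : ℝ) - 1/2) ((z i : ℝ) + 1/2)) := by
  ext x
  simp [unitCube, Set.mem_pi, Set.mem_Ico]

lemma measurableSet_unitCube (z : Fin d → ℤ) : MeasurableSet (unitCube d z) := by
  rw [unitCube_eq]
  exact (MeasurableEquiv.measurable _) (MeasurableSet.univ_pi fun i => measurableSet_Ico)

lemma volume_unitCube (z : Fin d → ℤ) : volume (unitCube d z) = 1 := by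
  rw [unitCube_eq,
    (EuclideanSpace.volume_preserving_symm_measurableEquiv_toLp (Fin d)).measure_preimage
      ((MeasurableSet.univ_pi fun i => measurableSet_Ico).nullMeasurableSet),
    volume_pi_pi]
  simp [Real.volume_Ico]
  ring_nf
  simp

lemma eq_floor_of_mem_unitCube {z : Fin d → ℤ} {x : EuclideanSpace ℝ (Fin d)}
    (hx : x ∈ unitCube d z) (i : Fin d) : z i = ⌊(x i : ℝ) + 1/2⌋ := by
  have h := hx i
  symm
  rw [Int.floor_eq_iff]
  constructor <;> push_cast <;> [linarith [h.1]; linarith [h.2]]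

lemma unitCube_disjoint : Pairwise (Function.onFun Disjoint (unitCube d)) := by
  intro z w hzw
  rw [Function.onFun, Set.disjoint_left]
  rintro x hx hx'
  exact hzw (funext fun i => (eq_floor_of_mem_unitCube hx i).trans
    (eq_floor_of_mem_unitCube hx' i).symm)

lemma iUnion_unitCube : (⋃ z : Fin d → ℤ, unitCube d z) = Set.univ := by
  ext x
  simp only [Set.mem_iUnion, Set.mem_univ, iff_true]
  refine ⟨fun i => ⌊(x i : ℝ) + 1/2⌋, fun i => ?_⟩
  constructor
  · have := Int.floor_le ((x i : ℝ) + 1/2); linarith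
  · have := Int.lt_floor_add_one ((x i : ℝ) + 1/2); linarith

lemma lintegral_eq_tsum_unitCube (h : EuclideanSpace ℝ (Fin d) → ℝ≥0∞) :
    ∫⁻ x, h x = ∑' z : Fin d → ℤ, ∫⁻ x in unitCube d z, h x := by
  conv_lhs => rw [← Measure.restrict_univ (μ := volume), ← iUnion_unitCube]
  exact lintegral_iUnion (fun z => measurableSet_unitCube z) unitCube_disjoint h

lemma indicator_ofReal_mul (z : Fin d → ℤ) (f g : EuclideanSpace ℝ (Fin d) → ℝ) (x) :
    (unitCube d z).indicator (fun x => ENNReal.ofReal (f x * g x)) x =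
      ENNReal.ofReal ((unitCube d z).indicator f x * (unitCube d z).indicator g x) := by
  by_cases hx : x ∈ unitCube d z <;> simp [Set.indicator, hx]

lemma lintegral_ofReal_mul_eq_eLpNorm_one {f : EuclideanSpace ℝ (Fin d) → ℝ}
    (hf0 : 0 ≤ f) : ∫⁻ x, ENNReal.ofReal (f x) = eLpNorm f 1 volume := by
  rw [eLpNorm_one_eq_lintegral_enorm]
  exact lintegral_congr fun x => (Real.enorm_eq_ofReal (hf0 x)).symm

lemma upper_bound (p p' : ℝ≥0∞) (hpp' : 1/p + 1/p' = 1)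
    (g : EuclideanSpace ℝ (Fin d) → ℝ) (hg : Measurable g) (hg0 : 0 ≤ g)
    (f : EuclideanSpace ℝ (Fin d) → ℝ) (hfm : Measurable f) (hf0 : 0 ≤ f)
    (hfn : locNorm d p' f ≤ 1) :
    ∫⁻ x, ENNReal.ofReal (f x * g x) ≤ locNormStar d p g := by
  rw [lintegral_eq_tsum_unitCube]
  refine ENNReal.tsum_le_tsum fun z => ?_
  have hm := measurableSet_unitCube z
  set F := (unitCube d z).indicator f with hF
  set G := (unitCube d z).indicator g with hG
  have hFm : Measurable F := hfm.indicator hm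
  have hGm : Measurable G := hg.indicator hm
  calc ∫⁻ x in unitCube d z, ENNReal.ofReal (f x * g x)
      = ∫⁻ x, ENNReal.ofReal (F x * G x) := by
        rw [← lintegral_indicator hm]
        exact lintegral_congr fun x => indicator_ofReal_mul z f g x
    _ = eLpNorm (fun x => F x * G x) 1 volume := by
        refine lintegral_ofReal_mul_eq_eLpNorm_one fun x => ?_
        exact mul_nonneg (Set.indicator_nonneg (fun y _ => hf0 y) x)
          (Set.indicator_nonneg (fun y _ => hg0 y) x)
    _ ≤ eLpNorm F p' volume * eLpNorm G p volume := by
        have h2 := hpp'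
        rw [add_comm, one_div, one_div] at h2
        haveI : HolderTriple p' p 1 := ⟨by rw [inv_one]; exact h2⟩
        simpa using eLpNorm_le_eLpNorm_mul_eLpNorm_of_nnnorm hFm.aestronglyMeasurable
          hGm.aestronglyMeasurable (· * ·) 1
          (Filter.Eventually.of_forall fun x => by rw [one_mul]; exact (nnnorm_mul _ _).le)
    _ ≤ 1 * eLpNorm G p volume := by
        gcongr
        exact le_trans (le_iSup (fun w => eLpNorm ((unitCube d w).indicator f) p' volume) z) hfn
    _ = eLpNorm G p volume := one_mul _

lemma conj_real {p p' : ℝ≥0∞} (hp1 : 1 < p) (hpt : p ≠ ⊤) (hpp' : 1/p + 1/p' = 1) :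
    p' ≠ 0 ∧ p' ≠ ⊤ ∧ p.toReal.HolderConjugate p'.toReal := by
  rw [one_div, one_div] at hpp'
  have hp0 : p ≠ 0 := (zero_lt_one.trans hp1).ne'
  have hpinvt : p⁻¹ ≠ ⊤ := by simp [hp0]
  have hp'inv0 : p'⁻¹ ≠ 0 := by
    intro h
    rw [h, add_zero] at hpp'
    exact hp1.ne' (by simpa [inv_eq_one] using hpp')
  have hp't : p' ≠ ⊤ := by simpa [ENNReal.inv_ne_zero] using hp'inv0
  have hp'invt : p'⁻¹ ≠ ⊤ := by
    intro h
    rw [h] at hpp'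
    simp [ENNReal.add_eq_top] at hpp'
  have hp'0 : p' ≠ 0 := by simpa [ENNReal.inv_ne_top] using hp'invt
  refine ⟨hp'0, hp't, Real.holderConjugate_iff.mpr ⟨?_, ?_⟩⟩
  · have := (ENNReal.toReal_lt_toReal (ENNReal.one_ne_top) hpt).mpr hp1
    simpa using this
  · have := congrArg ENNReal.toReal hpp'
    rw [ENNReal.toReal_add hpinvt hp'invt, ENNReal.toReal_inv, ENNReal.toReal_inv] at this
    simpa using this

lemma percube_core {p p' : ℝ≥0∞} (hp1 : 1 < p) (hpt : p ≠ ⊤) (hpp' : 1/p + 1/p' = 1)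
    (G : EuclideanSpace ℝ (Fin d) → ℝ) (hG : Measurable G) (hG0 : 0 ≤ G)
    (hA0 : ∫⁻ x, (ENNReal.ofReal (G x)) ^ p.toReal ≠ 0)
    (hAt : ∫⁻ x, (ENNReal.ofReal (G x)) ^ p.toReal ≠ ⊤) :
    ∃ f : EuclideanSpace ℝ (Fin d) → ℝ, Measurable f ∧ 0 ≤ f ∧
      (∀ x, G x = 0 → f x = 0) ∧ eLpNorm f p' volume ≤ 1 ∧
      eLpNorm G p volume ≤ ∫⁻ x, ENNReal.ofReal (f x * G x) := by
  obtain ⟨hp'0, hp't, hrr'⟩ := conj_real hp1 hpt hpp'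
  set r := p.toReal with hrdef
  set r' := p'.toReal with hr'def
  have hr1 : 1 < r := Real.HolderTriple.lt hrr'
  have hr0 : 0 < r := by linarith
  have hr'1 : 1 < r' := Real.HolderTriple.lt hrr'.symm
  have hr'0 : 0 < r' := by linarith
  set A := ∫⁻ x, (ENNReal.ofReal (G x)) ^ r with hAdef
  have hAtr : 0 < A.toReal := ENNReal.toReal_pos hA0 hAt
  set c := A.toReal ^ ((1 - r)/r) with hcdef
  have hc0 : 0 < c := Real.rpow_pos_of_pos hAtr _
  have hofc : ENNReal.ofReal c = A ^ ((1 - r)/r) := by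
    rw [hcdef, ENNReal.toReal_rpow, ENNReal.ofReal_toReal]
    simp [ENNReal.rpow_eq_top_iff, hA0, hAt]
  have hf0 : ∀ x, 0 ≤ c * G x ^ (r - 1) :=
    fun x => mul_nonneg hc0.le (Real.rpow_nonneg (hG0 x) _)
  have key : ∀ x, ENNReal.ofReal (c * G x ^ (r - 1) * G x)
      = ENNReal.ofReal c * (ENNReal.ofReal (G x)) ^ r := by
    intro x
    rcases eq_or_lt_of_le (hG0 x) with h0 | h0
    · rw [← h0]
      simp [Real.zero_rpow (show r - 1 ≠ 0 by linarith),
        ENNReal.zero_rpow_of_pos hr0]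
    · have hgx : G x ^ (r - 1) * G x = G x ^ r := by
        have h := (Real.rpow_add h0 (r - 1) 1).symm
        rw [Real.rpow_one] at h
        rw [h]
        norm_num
      rw [mul_assoc, hgx, ENNReal.ofReal_mul hc0.le,
        ENNReal.ofReal_rpow_of_nonneg (hG0 x) hr0.le]
  refine ⟨fun x => c * G x ^ (r - 1),
    measurable_const.mul (hG.pow_const (r - 1)), hf0, ?_, ?_, ?_⟩
  · intro x hx
    simp [hx, Real.zero_rpow (show r - 1 ≠ 0 by linarith)]
  · -- eLpNorm f p' = 1
    have h1 : ∀ x, (‖c * G x ^ (r - 1)‖ₑ) ^ r'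
        = (ENNReal.ofReal c) ^ r' * (ENNReal.ofReal (G x)) ^ r := by
      intro x
      rw [Real.enorm_eq_ofReal (hf0 x), ENNReal.ofReal_mul hc0.le,
        ENNReal.mul_rpow_of_nonneg _ _ hr'0.le,
        ← ENNReal.ofReal_rpow_of_nonneg (hG0 x) (by linarith : (0:ℝ) ≤ r - 1),
        ← ENNReal.rpow_mul, hrr'.sub_one_mul_conj]
    have h := hrr'.sub_one_mul_conj
    rw [eLpNorm_eq_lintegral_rpow_enorm_toReal hp'0 hp't]
    simp_rw [← hr'def, h1]
    rw [lintegral_const_mul' _ _ (ENNReal.rpow_ne_top_of_nonneg hr'0.le ENNReal.ofReal_ne_top),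
      ← hAdef, hofc]
    refine le_of_eq ?_
    calc ((A ^ ((1 - r)/r)) ^ r' * A) ^ (1/r')
        = (A ^ ((1 - r)/r * r') * A ^ (1:ℝ)) ^ (1/r') := by
          rw [← ENNReal.rpow_mul, ENNReal.rpow_one]
      _ = (A ^ ((1 - r)/r * r' + 1)) ^ (1/r') := by
          rw [← ENNReal.rpow_add _ _ hA0 hAt]
      _ = A ^ (((1 - r)/r * r' + 1) * (1/r')) := by rw [← ENNReal.rpow_mul]
      _ = A ^ (0:ℝ) := by
          congr 1
          field_simp
          linear_combination -h
      _ = 1 := ENNReal.rpow_zero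
  · -- eLpNorm G p ≤ ∫
    have hGnorm : eLpNorm G p volume = A ^ (1/r) := by
      rw [eLpNorm_eq_lintegral_rpow_enorm_toReal (zero_lt_one.trans hp1).ne' hpt]
      simp_rw [← hrdef]
      congr 1
      refine lintegral_congr fun x => ?_
      rw [Real.enorm_eq_ofReal (hG0 x)]
    rw [hGnorm]
    simp_rw [key]
    rw [lintegral_const_mul' _ _ ENNReal.ofReal_ne_top, ← hAdef, hofc]
    refine le_of_eq ?_
    calc A ^ (1/r) = A ^ ((1 - r)/r + 1) := by
          congr 1
          field_simp
          ring
      _ = A ^ ((1 - r)/r) * A ^ (1:ℝ) := ENNReal.rpow_add _ _ hA0 hAt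
      _ = A ^ ((1 - r)/r) * A := by rw [ENNReal.rpow_one]

lemma eLpNorm_nonneg_eq {p : ℝ≥0∞} (hp0 : p ≠ 0) (hpt : p ≠ ⊤)
    {G : EuclideanSpace ℝ (Fin d) → ℝ} (hG0 : 0 ≤ G) :
    eLpNorm G p volume = (∫⁻ x, (ENNReal.ofReal (G x)) ^ p.toReal) ^ (1/p.toReal) := by
  rw [eLpNorm_eq_lintegral_rpow_enorm_toReal hp0 hpt]
  congr 1
  refine lintegral_congr fun x => ?_
  rw [Real.enorm_eq_ofReal (hG0 x)]

lemma percube {p p' : ℝ≥0∞} (hp : 1 ≤ p) (hpp' : 1/p + 1/p' = 1)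
    (z : Fin d → ℤ) (g : EuclideanSpace ℝ (Fin d) → ℝ) (hg : Measurable g) (hg0 : 0 ≤ g)
    (b : ℝ≥0∞) (hb : b < eLpNorm ((unitCube d z).indicator g) p volume) :
    ∃ f : EuclideanSpace ℝ (Fin d) → ℝ, Measurable f ∧ 0 ≤ f ∧
      (∀ x, x ∉ unitCube d z → f x = 0) ∧ eLpNorm f p' volume ≤ 1 ∧
      b ≤ ∫⁻ x, ENNReal.ofReal (f x * g x) := by
  have hm := measurableSet_unitCube z
  set G := (unitCube d z).indicator g with hGdef
  have hGm : Measurable G := hg.indicator hm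
  have hG0 : 0 ≤ G := fun x => Set.indicator_nonneg (fun y _ => hg0 y) x
  have hGz : ∀ x, x ∉ unitCube d z → G x = 0 := fun x hx => Set.indicator_of_notMem hx g
  have hGg : ∀ x, x ∈ unitCube d z → G x = g x := fun x hx => Set.indicator_of_mem hx g
  rcases eq_or_lt_of_le hp with hp1 | hp1
  · -- p = 1, p' = ⊤
    have hp't : p' = ⊤ := by
      rw [← hp1] at hpp'
      have h0 : 1/p' = 0 := by
        refine (ENNReal.add_right_inj (a := (1:ℝ≥0∞)) ENNReal.one_ne_top).mp ?_
        rw [add_zero]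
        simpa using hpp'
      simpa [one_div, ENNReal.inv_eq_zero] using h0
    refine ⟨(unitCube d z).indicator (fun _ => (1:ℝ)),
      measurable_const.indicator hm, fun x => Set.indicator_nonneg (fun _ _ => zero_le_one) x,
      fun x hx => Set.indicator_of_notMem hx _, ?_, ?_⟩
    · rw [hp't, eLpNorm_exponent_top]
      refine (eLpNormEssSup_indicator_const_le _ _).trans ?_
      simp
    · have hfg : ∀ x, (unitCube d z).indicator (fun _ => (1:ℝ)) x * g x = G x := by
        intro x
        by_cases hx : x ∈ unitCube d z <;>
          simp [Set.indicator, hx, hGdef]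
      calc b ≤ eLpNorm G 1 volume := by rw [← hp1] at hb; exact hb.le
        _ = ∫⁻ x, ENNReal.ofReal (G x) := (lintegral_ofReal_mul_eq_eLpNorm_one hG0).symm
        _ = ∫⁻ x, ENNReal.ofReal ((unitCube d z).indicator (fun _ => (1:ℝ)) x * g x) := by
            refine lintegral_congr fun x => ?_
            rw [hfg x]
  rcases eq_or_ne p ⊤ with hpt | hpt
  · -- p = ⊤, p' = 1
    have hp'1 : p' = 1 := by
      rw [hpt] at hpp'
      simp only [one_div, ENNReal.inv_top, zero_add] at hpp'
      rwa [ENNReal.inv_eq_one] at hpp'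
    rw [hpt, eLpNorm_exponent_top] at hb
    obtain ⟨τ, hbτ, hτa⟩ := exists_between hb
    have hτ0 : τ ≠ 0 := (lt_of_le_of_lt zero_le hbτ).ne'
    have hτt : τ ≠ ⊤ := hτa.ne_top
    set S := {x | τ < (‖G x‖₊ : ℝ≥0∞)} with hSdef
    have hSm : MeasurableSet S := measurableSet_lt measurable_const hGm.enorm
    have hS0 : volume S ≠ 0 := by
      intro h
      have hae : ∀ᵐ x, (‖G x‖₊ : ℝ≥0∞) ≤ τ := by
        rw [ae_iff]
        simpa [hSdef, not_le] using h
      exact absurd (essSup_le_of_ae_le τ hae) (not_le.mpr hτa)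
    have hScube : S ⊆ unitCube d z := by
      intro x hx
      by_contra hxc
      rw [hSdef, Set.mem_setOf_eq, hGz x hxc] at hx
      simp at hx
    have hSt : volume S ≠ ⊤ :=
      (lt_of_le_of_lt (measure_mono hScube) (by rw [volume_unitCube]; exact one_lt_top)).ne
    set m := volume S with hmdef
    have hmr : 0 < m.toReal := ENNReal.toReal_pos hS0 hSt
    refine ⟨S.indicator (fun _ => m.toReal⁻¹),
      measurable_const.indicator hSm,
      fun x => Set.indicator_nonneg (fun _ _ => (inv_nonneg.mpr hmr.le)) x,
      fun x hx => Set.indicator_of_notMem (fun hxS => hx (hScube hxS)) _, ?_, ?_⟩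
    · rw [hp'1]
      rw [← lintegral_ofReal_mul_eq_eLpNorm_one
          (fun x => Set.indicator_nonneg (fun _ _ => (inv_nonneg.mpr hmr.le)) x)]
      have : ∀ x, ENNReal.ofReal (S.indicator (fun _ => m.toReal⁻¹) x)
          = S.indicator (fun _ => ENNReal.ofReal m.toReal⁻¹) x := by
        intro x
        by_cases hx : x ∈ S <;> simp [Set.indicator, hx]
      simp_rw [this]
      rw [lintegral_indicator_const hSm, ENNReal.ofReal_inv_of_pos hmr,
        ENNReal.ofReal_toReal hSt, ENNReal.inv_mul_cancel hS0 hSt]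
    · calc b ≤ τ := hbτ.le
        _ = m⁻¹ * τ * m := by
            rw [mul_comm m⁻¹ τ, mul_assoc, ENNReal.inv_mul_cancel hS0 hSt, mul_one]
        _ = ∫⁻ _ in S, m⁻¹ * τ := by rw [setLIntegral_const, hmdef]
        _ ≤ ∫⁻ x in S, ENNReal.ofReal (S.indicator (fun _ => m.toReal⁻¹) x * g x) := by
            refine setLIntegral_mono' hSm fun x hx => ?_
            rw [Set.indicator_of_mem hx, ENNReal.ofReal_mul (inv_nonneg.mpr hmr.le),
              ENNReal.ofReal_inv_of_pos hmr, ENNReal.ofReal_toReal hSt]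
            have hgx : τ ≤ ENNReal.ofReal (g x) := by
              have hx' : τ < ‖G x‖ₑ := hx
              have := hx'.le
              rwa [Real.enorm_eq_ofReal (hG0 x), hGg x (hScube hx)] at this
            exact mul_le_mul_right hgx _
        _ ≤ ∫⁻ x, ENNReal.ofReal (S.indicator (fun _ => m.toReal⁻¹) x * g x) :=
            setLIntegral_le_lintegral _ _
  · -- 1 < p < ⊤
    have hp0 : p ≠ 0 := (zero_lt_one.trans hp1).ne'
    set r := p.toReal with hrdef
    have hr0 : 0 < r := ENNReal.toReal_pos hp0 hpt
    have hbt : b ≠ ⊤ := hb.ne_top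
    rcases eq_or_ne (∫⁻ x, (ENNReal.ofReal (G x)) ^ r) ⊤ with hAt | hAt
    · -- truncation
      set Gn := fun (n : ℕ) (x : EuclideanSpace ℝ (Fin d)) => min (G x) n with hGndef
      have hGnm : ∀ n, Measurable (Gn n) := fun n => hGm.min measurable_const
      have hGn0 : ∀ n x, 0 ≤ Gn n x := fun n x => le_min (hG0 x) (Nat.cast_nonneg n)
      have hmono : Monotone fun n => fun x => (ENNReal.ofReal (Gn n x)) ^ r := by
        intro n k hnk
        refine fun x => ENNReal.rpow_le_rpow (ENNReal.ofReal_le_ofReal ?_) hr0.le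
        exact min_le_min le_rfl (Nat.cast_le.mpr hnk)
      have hsup : (⨆ n, ∫⁻ x, (ENNReal.ofReal (Gn n x)) ^ r) = ⊤ := by
        have hmeas : ∀ n, Measurable fun x => (ENNReal.ofReal (Gn n x)) ^ r :=
          fun n => (ENNReal.measurable_ofReal.comp (hGnm n)).pow_const r
        rw [← lintegral_iSup hmeas hmono]
        rw [← hAt]
        refine lintegral_congr fun x => ?_
        refine le_antisymm (iSup_le fun n => ?_) ?_
        · exact ENNReal.rpow_le_rpow (ENNReal.ofReal_le_ofReal (min_le_left _ _)) hr0.le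
        · obtain ⟨n, hn⟩ := exists_nat_ge (G x)
          refine le_trans (le_of_eq ?_) (le_iSup _ n)
          rw [hGndef]
          simp only [min_eq_left hn]
      have hbr : b ^ r ≠ ⊤ := ENNReal.rpow_ne_top_of_nonneg hr0.le hbt
      obtain ⟨n, hn⟩ : ∃ n, b ^ r < ∫⁻ x, (ENNReal.ofReal (Gn n x)) ^ r := by
        rw [← lt_iSup_iff, hsup]
        exact hbr.lt_top
      have hAn0 : (∫⁻ x, (ENNReal.ofReal (Gn n x)) ^ r) ≠ 0 :=
        (lt_of_le_of_lt zero_le hn).ne'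
      have hAnt : (∫⁻ x, (ENNReal.ofReal (Gn n x)) ^ r) ≠ ⊤ := by
        have hle : ∀ x, (ENNReal.ofReal (Gn n x)) ^ r ≤
            (unitCube d z).indicator (fun _ => (ENNReal.ofReal n) ^ r) x := by
          intro x
          by_cases hx : x ∈ unitCube d z
          · rw [Set.indicator_of_mem hx]
            exact ENNReal.rpow_le_rpow (ENNReal.ofReal_le_ofReal (min_le_right _ _)) hr0.le
          · rw [Set.indicator_of_notMem hx]
            have hzero : Gn n x = 0 := by
              rw [hGndef]
              simp [hGz x hx, min_eq_left (show (0:ℝ) ≤ (n:ℝ) from Nat.cast_nonneg n)]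
            rw [hzero]
            simp [ENNReal.zero_rpow_of_pos hr0]
        refine (lt_of_le_of_lt (lintegral_mono hle) ?_).ne
        rw [lintegral_indicator_const hm, volume_unitCube, mul_one]
        exact ENNReal.rpow_lt_top_of_nonneg hr0.le ENNReal.ofReal_ne_top
      obtain ⟨f, hfm, hf0, hfz, hfn, hfi⟩ :=
        percube_core hp1 hpt hpp' (Gn n) (hGnm n) (fun x => hGn0 n x) hAn0 hAnt
      refine ⟨f, hfm, hf0, ?_, hfn, ?_⟩
      · intro x hx
        refine hfz x ?_
        rw [hGndef]
        simp [hGz x hx, min_eq_left (show (0:ℝ) ≤ (n:ℝ) from Nat.cast_nonneg n)]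
      · have hble : b ≤ eLpNorm (Gn n) p volume := by
          rw [eLpNorm_nonneg_eq hp0 hpt (fun x => hGn0 n x), ← hrdef]
          have := ENNReal.rpow_le_rpow hn.le (by positivity : (0:ℝ) ≤ 1/r)
          rwa [← ENNReal.rpow_mul, mul_one_div, div_self hr0.ne', ENNReal.rpow_one] at this
        refine hble.trans (hfi.trans (lintegral_mono fun x => ?_))
        refine ENNReal.ofReal_le_ofReal ?_
        by_cases hx : x ∈ unitCube d z
        · refine mul_le_mul_of_nonneg_left ?_ (hf0 x)
          rw [hGndef, ← hGg x hx]
          exact min_le_left _ _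
        · rw [hfz x (by rw [hGndef]; simp [hGz x hx, min_eq_left (show (0:ℝ) ≤ (n:ℝ) from Nat.cast_nonneg n)])]
          simp
    · -- finite case
      have hA0 : (∫⁻ x, (ENNReal.ofReal (G x)) ^ r) ≠ 0 := by
        intro h
        rw [eLpNorm_nonneg_eq hp0 hpt hG0, ← hrdef, h,
          ENNReal.zero_rpow_of_pos (by positivity)] at hb
        exact (not_lt.mpr zero_le) hb
      obtain ⟨f, hfm, hf0, hfz, hfn, hfi⟩ :=
        percube_core hp1 hpt hpp' G hGm hG0 hA0 hAt
      refine ⟨f, hfm, hf0, fun x hx => hfz x (hGz x hx), hfn, ?_⟩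
      refine (hb.le.trans hfi).trans (le_of_eq (lintegral_congr fun x => ?_))
      by_cases hx : x ∈ unitCube d z
      · rw [hGg x hx]
      · rw [hfz x (hGz x hx)]
        simp

lemma exists_approx {ι : Type*} [DecidableEq ι] (S : Finset ι) (a : ι → ℝ≥0∞) {c : ℝ≥0∞}
    (hc : c < ∑ z ∈ S, a z) :
    ∃ b : ι → ℝ≥0∞, (∀ z ∈ S, b z < a z ∨ b z = 0) ∧ c ≤ ∑ z ∈ S, b z := by
  by_cases htop : ∃ z ∈ S, a z = ⊤
  · obtain ⟨z0, hz0S, hz0⟩ := htop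
    refine ⟨fun z => if z = z0 then c else 0, fun z hz => ?_, ?_⟩
    · by_cases h : z = z0
      · subst h
        left
        simp only [if_pos rfl, hz0]
        exact hc.ne_top.lt_top
      · right; simp [h]
    · rw [Finset.sum_ite_eq' S z0 (fun _ => c), if_pos hz0S]
  · push_neg at htop
    have hsumt : (∑ z ∈ S, a z) ≠ ⊤ := by
      rw [ne_eq, ENNReal.sum_eq_top]
      push_neg
      exact htop
    set T := ∑ z ∈ S, a z with hTdef
    have hδ : 0 < T - c := tsub_pos_of_lt hc
    set ε := (T - c) / (S.card + 1) with hεdef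
    have hε0 : ε ≠ 0 := by
      rw [hεdef]
      simp only [ne_eq, ENNReal.div_eq_zero_iff, not_or]
      exact ⟨hδ.ne', by simp⟩
    refine ⟨fun z => a z - ε, fun z hz => ?_, ?_⟩
    · rcases eq_or_ne (a z) 0 with h0 | h0
      · right; simp [h0, zero_tsub]
      · left; exact ENNReal.sub_lt_self (htop z hz) h0 hε0
    · have h1 : T ≤ (∑ z ∈ S, (a z - ε)) + S.card * ε := by
        calc T = ∑ z ∈ S, a z := hTdef
          _ ≤ ∑ z ∈ S, ((a z - ε) + ε) := Finset.sum_le_sum fun z _ => le_tsub_add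
          _ = (∑ z ∈ S, (a z - ε)) + S.card * ε := by
              rw [Finset.sum_add_distrib, Finset.sum_const, nsmul_eq_mul]
      have h2 : (S.card : ℝ≥0∞) * ε ≤ T - c := by
        calc (S.card : ℝ≥0∞) * ε ≤ (S.card + 1) * ε := by gcongr; exact le_self_add
          _ = T - c := ENNReal.mul_div_cancel' (by simp) (by simp)
      have h3 : T ≤ (∑ z ∈ S, (a z - ε)) + (T - c) := h1.trans (by gcongr)
      calc c = T - (T - c) := (ENNReal.sub_sub_cancel hsumt hc.le).symm
        _ ≤ ∑ z ∈ S, (a z - ε) := tsub_le_iff_right.mpr h3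

lemma lower_partial {p p' : ℝ≥0∞} (hp : 1 ≤ p) (hpp' : 1/p + 1/p' = 1)
    (g : EuclideanSpace ℝ (Fin d) → ℝ) (hg : Measurable g) (hg0 : 0 ≤ g)
    (S : Finset (Fin d → ℤ)) (b : (Fin d → ℤ) → ℝ≥0∞)
    (hb : ∀ z ∈ S, b z < eLpNorm ((unitCube d z).indicator g) p volume ∨ b z = 0) :
    ∑ z ∈ S, b z ≤ ⨆ f : {f : EuclideanSpace ℝ (Fin d) → ℝ //
        Measurable f ∧ 0 ≤ f ∧ locNorm d p' f ≤ 1},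
      ∫⁻ x, ENNReal.ofReal (f.1 x * g x) := by
  classical
  have hch : ∀ z : Fin d → ℤ, ∃ f : EuclideanSpace ℝ (Fin d) → ℝ,
      Measurable f ∧ 0 ≤ f ∧ (∀ x, x ∉ unitCube d z → f x = 0) ∧ eLpNorm f p' volume ≤ 1 ∧
      (z ∈ S → b z ≤ ∫⁻ x, ENNReal.ofReal (f x * g x)) := by
    intro z
    by_cases hzS : z ∈ S
    · rcases hb z hzS with hlt | h0
      · obtain ⟨f, h1, h2, h3, h4, h5⟩ := percube hp hpp' z g hg hg0 (b z) hlt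
        exact ⟨f, h1, h2, h3, h4, fun _ => h5⟩
      · exact ⟨fun _ => 0, measurable_const, fun x => le_rfl, fun _ _ => rfl,
          by simp [eLpNorm_zero'], fun _ => by simp [h0]⟩
    · exact ⟨fun _ => 0, measurable_const, fun x => le_rfl, fun _ _ => rfl,
        by simp [eLpNorm_zero'], fun h => absurd h hzS⟩
  choose F hFm hF0 hFz hFn hFi using hch
  set f : EuclideanSpace ℝ (Fin d) → ℝ := fun x => ∑ z ∈ S, F z x with hfdef
  have hfm : Measurable f := Finset.measurable_sum S fun z _ => hFm z
  have hf0 : 0 ≤ f := fun x => Finset.sum_nonneg fun z _ => hF0 z x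
  have hind : ∀ w : Fin d → ℤ,
      (unitCube d w).indicator f = if w ∈ S then F w else fun _ => 0 := by
    intro w
    funext x
    by_cases hx : x ∈ unitCube d w
    · rw [Set.indicator_of_mem hx, hfdef]
      by_cases hw : w ∈ S
      · rw [if_pos hw]
        refine Finset.sum_eq_single_of_mem w hw fun z hz hzw => ?_
        refine hFz z x fun hxz => ?_
        exact Set.disjoint_left.mp (unitCube_disjoint hzw) hxz hx
      · rw [if_neg hw]
        refine Finset.sum_eq_zero fun z hz => ?_
        refine hFz z x fun hxz => ?_
        exact Set.disjoint_left.mp (unitCube_disjoint (show z ≠ w from fun h => hw (by rwa [h] at hz))) hxz hx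
    · rw [Set.indicator_of_notMem hx]
      by_cases hw : w ∈ S
      · rw [if_pos hw, hFz w x hx]
      · rw [if_neg hw]
  have hnorm : locNorm d p' f ≤ 1 := by
    refine iSup_le fun w => ?_
    rw [hind w]
    by_cases hw : w ∈ S
    · rw [if_pos hw]; exact hFn w
    · rw [if_neg hw]
      simp [eLpNorm_zero']
  refine le_trans ?_ (le_iSup (fun f : {f : EuclideanSpace ℝ (Fin d) → ℝ //
      Measurable f ∧ 0 ≤ f ∧ locNorm d p' f ≤ 1} =>
      ∫⁻ x, ENNReal.ofReal (f.1 x * g x)) ⟨f, hfm, hf0, hnorm⟩)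
  have hptw : ∀ x, ENNReal.ofReal (f x * g x) = ∑ z ∈ S, ENNReal.ofReal (F z x * g x) := by
    intro x
    rw [hfdef]
    simp only
    rw [Finset.sum_mul]
    exact ENNReal.ofReal_sum_of_nonneg fun z hz => mul_nonneg (hF0 z x) (hg0 x)
  calc ∑ z ∈ S, b z ≤ ∑ z ∈ S, ∫⁻ x, ENNReal.ofReal (F z x * g x) :=
        Finset.sum_le_sum fun z hz => hFi z hz
    _ = ∫⁻ x, ∑ z ∈ S, ENNReal.ofReal (F z x * g x) :=
        (lintegral_finset_sum S fun z _ =>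
          ENNReal.measurable_ofReal.comp ((hFm z).mul hg)).symm
    _ = ∫⁻ x, ENNReal.ofReal (f x * g x) := lintegral_congr fun x => (hptw x).symm

/-- Duality: up to constants depending only on `d` and `p`,
`|||g|||*_p ≍ sup { ∫ f·g : f ≥ 0 measurable, |||f|||_{p'} ≤ 1 }`. -/
theorem locNormStar_duality
    (d : ℕ) (hd : 1 ≤ d) (p p' : ℝ≥0∞) (hp : 1 ≤ p) (hpp' : 1/p + 1/p' = 1) :
    ∃ c C : ℝ, 0 < c ∧ c ≤ C ∧
      ∀ g : EuclideanSpace ℝ (Fin d) → ℝ, Measurable g → 0 ≤ g →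
        ENNReal.ofReal c * locNormStar d p g ≤
            (⨆ f : {f : EuclideanSpace ℝ (Fin d) → ℝ //
                Measurable f ∧ 0 ≤ f ∧ locNorm d p' f ≤ 1},
              ∫⁻ x, ENNReal.ofReal (f.1 x * g x)) ∧
        (⨆ f : {f : EuclideanSpace ℝ (Fin d) → ℝ //
            Measurable f ∧ 0 ≤ f ∧ locNorm d p' f ≤ 1},
          ∫⁻ x, ENNReal.ofReal (f.1 x * g x)) ≤
          ENNReal.ofReal C * locNormStar d p g := by
  classical
  refine ⟨1, 1, one_pos, le_rfl, fun g hg hg0 => ⟨?_, ?_⟩⟩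
  · rw [ENNReal.ofReal_one, one_mul, locNormStar, ENNReal.tsum_eq_iSup_sum]
    refine iSup_le fun S => ?_
    refine le_of_forall_lt fun c hc => ?_
    obtain ⟨c', hcc', hc'⟩ := exists_between hc
    obtain ⟨b, hbprop, hcb⟩ := exists_approx S _ hc'
    exact lt_of_lt_of_le hcc' (hcb.trans (lower_partial hp hpp' g hg hg0 S b hbprop))
  · rw [ENNReal.ofReal_one, one_mul]
    exact iSup_le fun f => upper_bound p p' hpp' g hg hg0 f.1 f.2.1 f.2.2.1 f.2.2.2

end
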